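/- The log-Catalan numbers c'_n are positive integers for all n ≥ 1. -/

import Mathlib

open PowerSeries

/-- The log-Catalan numbers `c'_n`, defined by
`∑_{n≥1} c'_n t^n = t · f'(t)/(1 + f(t))` in `ℚ[[t]]` (where `f` is the generating
series of the Catalan numbers), are positive integers for all `n ≥ 1`. -/
theorem stmt3 (c : ℕ → ℕ) (hc1 : c 1 = 1)
    (hrec : ∀ n, 2 ≤ n → c n = ∑ l ∈ Finset.Ico 1 n, c l * c (n - l))
    (f : PowerSeries ℚ)
    (hf : f = PowerSeries.mk fun n => if n = 0 then 0 else (c n : ℚ))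
    (c' : ℕ → ℚ) (hc'0 : c' 0 = 0)
    (hc' : (PowerSeries.mk fun n => c' n) * (1 + f) =
      PowerSeries.X * PowerSeries.derivativeFun f) :
    ∀ n, 1 ≤ n → ∃ m : ℕ, 0 < m ∧ c' n = (m : ℚ) := by
  -- Key coefficient recurrence
  have key : ∀ n : ℕ, c' (n+1) + ∑ l ∈ Finset.Ico 1 (n+1), c' l * c (n+1-l)
      = (n+1) * c (n+1) := by
    intro n
    have h := congrArg (PowerSeries.coeff (R := ℚ) (n+1)) hc'
    rw [coeff_succ_X_mul, show PowerSeries.coeff n f.derivativeFun = _ from coeff_derivative f n, PowerSeries.coeff_mul,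
      Finset.Nat.sum_antidiagonal_eq_sum_range_succ_mk, Finset.sum_range_succ] at h
    simp only [hf, coeff_mk, Nat.sub_self, if_pos rfl, map_add, PowerSeries.coeff_one] at h
    have h2 : ∑ x ∈ Finset.range (n+1), c' x * ((if n+1-x = 0 then (1:ℚ) else 0) +
        if n+1-x = 0 then 0 else (c (n+1-x) : ℚ)) = ∑ x ∈ Finset.Ico 1 (n+1), c' x * c (n+1-x) := by
      rw [Finset.range_eq_Ico, Finset.sum_eq_sum_Ico_succ_bot (by omega)]
      rw [hc'0, zero_mul, zero_add]
      apply Finset.sum_congr rfl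
      intro x hx
      simp only [Finset.mem_Ico] at hx
      rw [if_neg (by omega), if_neg (by omega), zero_add]
    rw [h2] at h
    push_cast at h ⊢
    linarith [h]
  -- positivity of Catalan numbers
  have hcpos : ∀ n, 1 ≤ n → 1 ≤ c n := by
    intro n
    induction n using Nat.strong_induction_on with
    | _ n ih =>
      intro hn
      rcases Nat.lt_or_ge n 2 with h2 | h2
      · interval_cases n
        · omega
      · rw [hrec n h2]
        calc 1 ≤ c 1 * c (n - 1) := by
              have := ih (n-1) (by omega) (by omega)
              rw [hc1]; omega
          _ ≤ ∑ l ∈ Finset.Ico 1 n, c l * c (n - l) := by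
              apply Finset.single_le_sum (f := fun l => c l * c (n - l))
              · intro i _; exact Nat.zero_le _
              · simp only [Finset.mem_Ico]; omega
  -- main claim with bounds
  have main : ∀ n, 1 ≤ n → ∃ m : ℕ, c n ≤ m ∧ m ≤ n * c n ∧ c' n = (m : ℚ) := by
    intro n
    induction n using Nat.strong_induction_on with
    | _ n ih =>
      intro hn
      rcases Nat.lt_or_ge n 2 with h2 | h2
      · have hn1 : n = 1 := by omega
        subst hn1
        refine ⟨1, by omega, by omega, ?_⟩
        have := key 0
        simp [hc1] at this
        simpa using this
      · obtain ⟨n', rfl⟩ : ∃ n', n = n' + 1 := ⟨n - 1, by omega⟩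
        -- choose total function m
        have hEx : ∀ l : ℕ, ∃ m : ℕ, (1 ≤ l ∧ l < n' + 1) →
            (c l ≤ m ∧ m ≤ l * c l ∧ c' l = (m : ℚ)) := by
          intro l
          by_cases hl : 1 ≤ l ∧ l < n' + 1
          · obtain ⟨m, hm⟩ := ih l hl.2 hl.1
            exact ⟨m, fun _ => hm⟩
          · exact ⟨0, fun h => absurd h hl⟩
        choose m hm using hEx
        set S : ℕ := ∑ l ∈ Finset.Ico 1 (n'+1), m l * c (n'+1-l) with hS
        have hsum : ∑ l ∈ Finset.Ico 1 (n'+1), c' l * c (n'+1-l) = (S : ℚ) := by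
          rw [hS]
          push_cast
          apply Finset.sum_congr rfl
          intro l hl
          simp only [Finset.mem_Ico] at hl
          rw [(hm l ⟨hl.1, hl.2⟩).2.2]
        have hcsum : c (n'+1) = ∑ l ∈ Finset.Ico 1 (n'+1), c l * c (n'+1-l) := hrec _ h2
        have hSlb : c (n'+1) ≤ S := by
          rw [hcsum, hS]
          apply Finset.sum_le_sum
          intro l hl
          simp only [Finset.mem_Ico] at hl
          exact Nat.mul_le_mul_right _ (hm l ⟨hl.1, hl.2⟩).1
        have hSub : S ≤ n' * c (n'+1) := by
          rw [hS, hcsum, Finset.mul_sum]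
          apply Finset.sum_le_sum
          intro l hl
          simp only [Finset.mem_Ico] at hl
          have h1 : m l ≤ l * c l := (hm l ⟨hl.1, hl.2⟩).2.1
          have h3 : l * c l ≤ n' * c l := Nat.mul_le_mul_right _ (by omega)
          calc m l * c (n'+1-l) ≤ (n' * c l) * c (n'+1-l) :=
                Nat.mul_le_mul_right _ (le_trans h1 h3)
            _ = n' * (c l * c (n'+1-l)) := by ring
        refine ⟨(n'+1) * c (n'+1) - S, ?_, ?_, ?_⟩
        · have : S + c (n'+1) ≤ (n'+1) * c (n'+1) := by
            calc S + c (n'+1) ≤ n' * c (n'+1) + c (n'+1) := by omega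
              _ = (n'+1) * c (n'+1) := by ring
          omega
        · omega
        · have hk := key n'
          rw [hsum] at hk
          have hle : S ≤ (n'+1) * c (n'+1) := by nlinarith [hcpos (n'+1) (by omega)]
          rw [Nat.cast_sub hle]
          push_cast
          linarith [hk]
  intro n hn
  obtain ⟨m, h1, _, h3⟩ := main n hn
  exact ⟨m, by have := hcpos n hn; omega, h3⟩
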